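/- Let Δt > 0 and ξ, w, Γ⁰, A, B ∈ ℝ³ be given, and perform one step of the heavy-top midpoint integrator: set Γ̃ := cay(−Δtξ̂)Γ⁰ and Γ¹ := cay(−Δtξ̂)Γ̃, and suppose A, B satisfy d⁻(Δt,ξ,A) − w × Γ̃ = d⁺(Δt,ξ,B); set Π⁰ := d⁺(Δt,ξ,A) and Π¹ := d⁻(Δt,ξ,B). Then both Casimir functions of the heavy-top Lie–Poisson bracket are exactly conserved: ‖Γ¹‖ = ‖Γ⁰‖ and Π¹ · Γ¹ = Π⁰ · Γ⁰. -/

import Mathlib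

open Matrix

noncomputable section

/-- The Euclidean norm on `ℝ³ = Fin 3 → ℝ`. -/
def e3norm (v : Fin 3 → ℝ) : ℝ := Real.sqrt (v ⬝ᵥ v)

/-- The hat map: the 3×3 skew-symmetric matrix `ξ̂` with `ξ̂ v = ξ × v`. -/
def hat (ξ : Fin 3 → ℝ) : Matrix (Fin 3) (Fin 3) ℝ :=
  !![0, -ξ 2, ξ 1; ξ 2, 0, -ξ 0; -ξ 1, ξ 0, 0]

/-- The Cayley transform `cay(hξ̂) = (I − (h/2)ξ̂)⁻¹ (I + (h/2)ξ̂)`. -/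
def cay (h : ℝ) (ξ : Fin 3 → ℝ) : Matrix (Fin 3) (Fin 3) ℝ :=
  (1 - (h / 2) • hat ξ)⁻¹ * (1 + (h / 2) • hat ξ)

/-- `d⁺(h,ξ,Π) = Π + (h/2) ξ×Π − (h²/4)(ξ·Π)ξ`. -/
def dplus (h : ℝ) (ξ Pv : Fin 3 → ℝ) : Fin 3 → ℝ :=
  Pv + (h / 2) • (ξ ⨯₃ Pv) - (h ^ 2 / 4 * (ξ ⬝ᵥ Pv)) • ξ

/-- `d⁻(h,ξ,Π) = Π − (h/2) ξ×Π − (h²/4)(ξ·Π)ξ`. -/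
def dminus (h : ℝ) (ξ Pv : Fin 3 → ℝ) : Fin 3 → ℝ :=
  Pv - (h / 2) • (ξ ⨯₃ Pv) - (h ^ 2 / 4 * (ξ ⬝ᵥ Pv)) • ξ


lemma hat_mulVec (ξ v : Fin 3 → ℝ) : (hat ξ).mulVec v = ξ ⨯₃ v := by
  funext i
  fin_cases i <;>
    simp [hat, mulVec, dotProduct, Fin.sum_univ_three, crossProduct] <;> ring

lemma det_M (c : ℝ) (ξ : Fin 3 → ℝ) : (1 + c • hat ξ).det = 1 + c^2 * (ξ ⬝ᵥ ξ) := by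
  simp [hat, Matrix.det_fin_three, Matrix.one_apply, dotProduct, Fin.sum_univ_three]
  ring

lemma det_M_ne (c : ℝ) (ξ : Fin 3 → ℝ) : (1 + c • hat ξ).det ≠ 0 := by
  rw [det_M]
  have h1 : (0:ℝ) ≤ ξ ⬝ᵥ ξ := by
    simp [dotProduct, Fin.sum_univ_three]
    nlinarith [mul_self_nonneg (ξ 0), mul_self_nonneg (ξ 1), mul_self_nonneg (ξ 2)]
  nlinarith [sq_nonneg c, mul_nonneg (sq_nonneg c) h1]

lemma M_mulVec (c : ℝ) (ξ v : Fin 3 → ℝ) :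
    (1 + c • hat ξ).mulVec v = v + c • (ξ ⨯₃ v) := by
  rw [Matrix.add_mulVec, Matrix.one_mulVec, Matrix.smul_mulVec, hat_mulVec]

lemma hat_transpose (ξ : Fin 3 → ℝ) : (hat ξ)ᵀ = -hat ξ := by
  funext i j
  fin_cases i <;> fin_cases j <;> simp [hat]

lemma sub_as_add (c : ℝ) (ξ : Fin 3 → ℝ) : 1 - c • hat ξ = 1 + (-c) • hat ξ := by
  rw [neg_smul, sub_eq_add_neg]

lemma M_comm (c d : ℝ) (ξ : Fin 3 → ℝ) :
    (1 + c • hat ξ) * (1 + d • hat ξ) = (1 + d • hat ξ) * (1 + c • hat ξ) := by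
  simp only [add_mul, mul_add, one_mul, mul_one, smul_mul_assoc, Matrix.mul_smul, smul_smul,
    mul_comm c d]
  abel

lemma cay_eq (h : ℝ) (ξ : Fin 3 → ℝ) :
    cay h ξ = (1 + (-(h/2)) • hat ξ)⁻¹ * (1 + (h/2) • hat ξ) := by
  rw [cay, sub_as_add]

lemma M_transpose (c : ℝ) (ξ : Fin 3 → ℝ) :
    (1 + c • hat ξ)ᵀ = 1 + (-c) • hat ξ := by
  rw [Matrix.transpose_add, Matrix.transpose_one, Matrix.transpose_smul, hat_transpose]
  rw [smul_neg, neg_smul]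

lemma cay_orth (h : ℝ) (ξ : Fin 3 → ℝ) : (cay h ξ)ᵀ * cay h ξ = 1 := by
  set c := h/2
  set S := hat ξ
  set A := 1 + (-c) • S with hA
  set B := 1 + c • S with hB
  have hAt : Aᵀ = B := by rw [hA, M_transpose, neg_neg]
  have hBt : Bᵀ = A := by rw [hB, M_transpose]
  have hdA : A.det ≠ 0 := det_M_ne (-c) ξ
  have hdB : B.det ≠ 0 := det_M_ne c ξ
  have hcomm : A * B = B * A := M_comm (-c) c ξ
  have hinv : B⁻¹ * A⁻¹ = A⁻¹ * B⁻¹ := by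
    rw [← Matrix.mul_inv_rev, ← Matrix.mul_inv_rev, hcomm]
  rw [cay_eq, Matrix.transpose_mul, Matrix.transpose_nonsing_inv, hAt, hBt]
  calc A * B⁻¹ * (A⁻¹ * B) = A * (B⁻¹ * A⁻¹) * B := by noncomm_ring
    _ = A * A⁻¹ * (B⁻¹ * B) := by rw [hinv]; noncomm_ring
    _ = 1 := by
        rw [Matrix.mul_nonsing_inv _ (isUnit_iff_ne_zero.2 hdA),
          Matrix.nonsing_inv_mul _ (isUnit_iff_ne_zero.2 hdB), one_mul]

lemma cay_dot (h : ℝ) (ξ u v : Fin 3 → ℝ) :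
    (cay h ξ) *ᵥ u ⬝ᵥ ((cay h ξ) *ᵥ v) = u ⬝ᵥ v := by
  rw [Matrix.dotProduct_mulVec, ← Matrix.mulVec_transpose, Matrix.mulVec_mulVec,
    cay_orth, Matrix.one_mulVec]

lemma key_id (h : ℝ) (ξ Pv : Fin 3 → ℝ) :
    dplus h ξ Pv + (-(h/2)) • (ξ ⨯₃ dplus h ξ Pv)
      = dminus h ξ Pv + (h/2) • (ξ ⨯₃ dminus h ξ Pv) := by
  funext i
  fin_cases i <;>
    simp [dplus, dminus, crossProduct, dotProduct, Fin.sum_univ_three,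
      Matrix.vecHead, Matrix.vecTail, Function.comp] <;> ring

lemma cay_neg_dplus (h : ℝ) (ξ Pv : Fin 3 → ℝ) :
    (cay (-h) ξ) *ᵥ dplus h ξ Pv = dminus h ξ Pv := by
  have h2 : (-h)/2 = -(h/2) := by ring
  rw [cay_eq, h2, neg_neg]
  rw [← Matrix.mulVec_mulVec, M_mulVec, key_id, ← M_mulVec, Matrix.mulVec_mulVec,
    Matrix.nonsing_inv_mul _ (isUnit_iff_ne_zero.2 (det_M_ne _ _)), Matrix.one_mulVec]

lemma cross_dot_self (w v : Fin 3 → ℝ) : (w ⨯₃ v) ⬝ᵥ v = 0 := by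
  simp [crossProduct, dotProduct, Fin.sum_univ_three]; ring

/-- One step of the heavy-top midpoint integrator exactly conserves both Casimir functions
of the heavy-top Lie–Poisson bracket on `se(3)* ≅ ℝ³ × ℝ³`: `‖Γ¹‖ = ‖Γ⁰‖` and
`Π¹ · Γ¹ = Π⁰ · Γ⁰`. -/
theorem heavy_top_step_conserves_casimirs
    (Δt : ℝ) (hΔt : 0 < Δt) (ξ w Γ₀ A B Γt Γ₁ Pv₀ Pv₁ : Fin 3 → ℝ)
    (hΓt : Γt = (cay (-Δt) ξ).mulVec Γ₀)
    (hΓ₁ : Γ₁ = (cay (-Δt) ξ).mulVec Γt)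
    (hAB : dminus Δt ξ A - w ⨯₃ Γt = dplus Δt ξ B)
    (hPv₀ : Pv₀ = dplus Δt ξ A)
    (hPv₁ : Pv₁ = dminus Δt ξ B) :
    e3norm Γ₁ = e3norm Γ₀ ∧ Pv₁ ⬝ᵥ Γ₁ = Pv₀ ⬝ᵥ Γ₀ := by
  subst hΓt hΓ₁ hPv₀ hPv₁
  refine ⟨?_, ?_⟩
  · unfold e3norm
    rw [show ((cay (-Δt) ξ).mulVec ((cay (-Δt) ξ).mulVec Γ₀)) ⬝ᵥ
        ((cay (-Δt) ξ).mulVec ((cay (-Δt) ξ).mulVec Γ₀)) = Γ₀ ⬝ᵥ Γ₀ from by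
      rw [cay_dot, cay_dot]]
  · rw [← cay_neg_dplus Δt ξ B, ← hAB, cay_dot, sub_dotProduct, cross_dot_self,
      sub_zero, ← cay_neg_dplus Δt ξ A, cay_dot]
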